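/- Let w be a positive integer and let a₁ ≥ a₂ ≥ ⋯ ≥ a_w ≥ a_{w+1} ≥ ⋯ ≥ a_{2w} ≥ 0 be a descending chain of real numbers. Then √(a_{w+1}² + a_{w+2}² + ⋯ + a_{2w}²) ≤ (a₁ + a₂ + ⋯ + a_w + a_{w+1} + ⋯ + a_{2w}) / (2√w). -/

import Mathlib

/-- For a nonincreasing chain `a₁ ≥ ⋯ ≥ a_{2w} ≥ 0` of real numbers,
`√(a_{w+1}² + ⋯ + a_{2w}²) ≤ (a₁ + ⋯ + a_{2w}) / (2√w)`. -/
theorem sqrt_sum_sq_tail_le (w : ℕ) (hw : 1 ≤ w) (a : ℕ → ℝ)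
    (hmono : ∀ i j, 1 ≤ i → i ≤ j → j ≤ 2 * w → a j ≤ a i)
    (hnonneg : 0 ≤ a (2 * w)) :
    Real.sqrt (∑ i ∈ Finset.Icc (w + 1) (2 * w), (a i) ^ 2) ≤
      (∑ i ∈ Finset.Icc 1 (2 * w), a i) / (2 * Real.sqrt w) := by
  have hpos : ∀ i, 1 ≤ i → i ≤ 2 * w → 0 ≤ a i := fun i h1 h2 =>
    le_trans hnonneg (hmono i (2 * w) h1 h2 le_rfl)
  set H := ∑ i ∈ Finset.Icc 1 w, a i with hH
  set T := ∑ i ∈ Finset.Icc (w + 1) (2 * w), a i with hT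
  set S := ∑ i ∈ Finset.Icc (w + 1) (2 * w), (a i) ^ 2 with hS
  have hsplit : (∑ i ∈ Finset.Icc 1 (2 * w), a i) = H + T := by
    rw [hH, hT, ← Finset.sum_union]
    · congr 1
      ext x
      simp only [Finset.mem_union, Finset.mem_Icc]
      omega
    · rw [Finset.disjoint_left]
      intro x hx hx'
      simp only [Finset.mem_Icc] at hx hx'
      omega
  have hHnn : 0 ≤ H := Finset.sum_nonneg fun i hi => by
    simp only [Finset.mem_Icc] at hi; exact hpos i hi.1 (by omega)
  have hTnn : 0 ≤ T := Finset.sum_nonneg fun i hi => by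
    simp only [Finset.mem_Icc] at hi; exact hpos i (by omega) hi.2
  -- S ≤ a(w+1) * T
  have h1 : S ≤ a (w + 1) * T := by
    rw [hS, hT, Finset.mul_sum]
    apply Finset.sum_le_sum
    intro i hi
    simp only [Finset.mem_Icc] at hi
    have hai : 0 ≤ a i := hpos i (by omega) hi.2
    have : a i ≤ a (w + 1) := hmono (w + 1) i (by omega) hi.1 hi.2
    nlinarith
  -- w * a(w+1) ≤ H
  have h2 : (w : ℝ) * a (w + 1) ≤ H := by
    have : (w : ℝ) * a (w + 1) = ∑ i ∈ Finset.Icc 1 w, a (w + 1) := by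
      rw [Finset.sum_const, Nat.card_Icc]
      simp
    rw [this, hH]
    apply Finset.sum_le_sum
    intro i hi
    simp only [Finset.mem_Icc] at hi
    exact hmono i (w + 1) hi.1 (by omega) (by omega)
  have hwpos : (0 : ℝ) < w := by exact_mod_cast hw
  have h3 : (w : ℝ) * S ≤ H * T := by
    calc (w : ℝ) * S ≤ w * (a (w + 1) * T) := by
          apply mul_le_mul_of_nonneg_left h1 (le_of_lt hwpos)
      _ = (w * a (w + 1)) * T := by ring
      _ ≤ H * T := mul_le_mul_of_nonneg_right h2 hTnn
  have hsqw : 0 < Real.sqrt w := Real.sqrt_pos.mpr hwpos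
  rw [hsplit, le_div_iff₀ (by positivity)]
  have hSle : S ≤ H * T / w := by
    rw [le_div_iff₀ hwpos]; linarith [h3]
  have hsqS : Real.sqrt S ≤ Real.sqrt (H * T) / Real.sqrt w := by
    rw [← Real.sqrt_div (mul_nonneg hHnn hTnn) w]
    exact Real.sqrt_le_sqrt hSle
  have hAMGM : 2 * Real.sqrt (H * T) ≤ H + T := by
    have h := sq_nonneg (Real.sqrt H - Real.sqrt T)
    have hH' := Real.sq_sqrt hHnn
    have hT' := Real.sq_sqrt hTnn
    have hmul : Real.sqrt (H * T) = Real.sqrt H * Real.sqrt T := Real.sqrt_mul hHnn T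
    nlinarith [Real.sqrt_nonneg H, Real.sqrt_nonneg T]
  calc Real.sqrt S * (2 * Real.sqrt w)
      ≤ (Real.sqrt (H * T) / Real.sqrt w) * (2 * Real.sqrt w) := by
        apply mul_le_mul_of_nonneg_right hsqS (by positivity)
    _ = 2 * Real.sqrt (H * T) := by field_simp
    _ ≤ H + T := hAMGM
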